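/- Let n ≥ 1 and 1 ≤ l ≤ n be natural numbers, let p be a probability vector on Fin n, and let u be a real number with ∑_i (p i)² ≤ u and (l : ℝ) ≥ 100 · u · n. Then the fraction of l-element subsets U of Fin n satisfying l/(2n) ≤ ∑_{i ∈ U} p i ≤ 3l/(2n) is at least 0.96. -/

import Mathlib

open scoped Classical

lemma cmc_count_subsets {α : Type*} [DecidableEq α] (s T : Finset α) (k : ℕ) (hT : T ⊆ s)
    (hk : T.card ≤ k) :
    ((Finset.powersetCard k s).filter (fun U => T ⊆ U)).card
      = (s.card - T.card).choose (k - T.card) := by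
  rw [← Finset.card_sdiff_of_subset hT, ← Finset.card_powersetCard]
  apply Finset.card_bij' (fun U _ => U \ T) (fun V _ => V ∪ T)
  · intro U hU
    simp only [Finset.mem_filter, Finset.mem_powersetCard] at hU
    obtain ⟨⟨hUs, hUc⟩, hTU⟩ := hU
    rw [Finset.mem_powersetCard]
    exact ⟨Finset.sdiff_subset_sdiff hUs (le_refl T), by rw [Finset.card_sdiff_of_subset hTU, hUc]⟩
  · intro V hV
    rw [Finset.mem_powersetCard] at hV
    obtain ⟨hVs, hVc⟩ := hV
    have hdisj : Disjoint V T := Finset.disjoint_of_subset_left hVs Finset.sdiff_disjoint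
    simp only [Finset.mem_filter, Finset.mem_powersetCard]
    refine ⟨⟨Finset.union_subset (hVs.trans (Finset.sdiff_subset)) hT, ?_⟩,
      Finset.subset_union_right⟩
    rw [Finset.card_union_of_disjoint hdisj, hVc, Nat.sub_add_cancel hk]
  · intro U hU
    simp only [Finset.mem_filter] at hU
    exact Finset.sdiff_union_of_subset hU.2
  · intro V hV
    rw [Finset.mem_powersetCard] at hV
    have hdisj : Disjoint V T := Finset.disjoint_of_subset_left hV.1 Finset.sdiff_disjoint
    exact Finset.union_sdiff_cancel_right hdisj

lemma cmc_swap_sum {n : ℕ} (P : Finset (Finset (Fin n))) (f : Fin n → ℝ) :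
    ∑ U ∈ P, ∑ i ∈ U, f i = ∑ i, ((P.filter (fun U => i ∈ U)).card : ℝ) * f i := by
  have h : ∀ U ∈ P, ∑ i ∈ U, f i = ∑ i : Fin n, if i ∈ U then f i else 0 := by
    intro U _; rw [Finset.sum_ite_mem, Finset.univ_inter]
  rw [Finset.sum_congr rfl h, Finset.sum_comm]
  refine Finset.sum_congr rfl fun i _ => ?_
  rw [← Finset.sum_filter, Finset.sum_const, nsmul_eq_mul]

lemma cmc_swap_sum2 {n : ℕ} (P : Finset (Finset (Fin n))) (f : Fin n → ℝ) :
    ∑ U ∈ P, (∑ i ∈ U, f i) ^ 2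
      = ∑ i, ∑ j, ((P.filter (fun U => i ∈ U ∧ j ∈ U)).card : ℝ) * (f i * f j) := by
  have h : ∀ U ∈ P, (∑ i ∈ U, f i) ^ 2
      = ∑ i : Fin n, ∑ j : Fin n, if i ∈ U ∧ j ∈ U then f i * f j else 0 := by
    intro U _
    have h1 : ∑ i ∈ U, f i = ∑ i : Fin n, if i ∈ U then f i else 0 := by
      rw [Finset.sum_ite_mem, Finset.univ_inter]
    rw [sq, h1, Finset.sum_mul_sum]
    refine Finset.sum_congr rfl fun i _ => Finset.sum_congr rfl fun j _ => ?_
    by_cases hi : i ∈ U <;> by_cases hj : j ∈ U <;> simp [hi, hj]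
  rw [Finset.sum_congr rfl h, Finset.sum_comm]
  refine Finset.sum_congr rfl fun i _ => ?_
  rw [Finset.sum_comm]
  refine Finset.sum_congr rfl fun j _ => ?_
  rw [← Finset.sum_filter, Finset.sum_const, nsmul_eq_mul]

set_option maxHeartbeats 1000000 in
/-- Lemma 6.4(1) (lem_sumpi) with explicit constants: if `‖p‖₂² ≤ u` and
`l ≥ 100·u·n`, then the fraction of `l`-element subsets `U` of `Fin n` with
`l/(2n) ≤ ∑ i ∈ U, p i ≤ 3l/(2n)` is at least `0.96`. -/
theorem conditional_mass_concentration (n l : ℕ) (hn : 1 ≤ n) (hl1 : 1 ≤ l) (hln : l ≤ n)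
    (p : Fin n → ℝ) (hp0 : ∀ i, 0 ≤ p i) (hp1 : ∑ i, p i = 1)
    (u : ℝ) (hu : ∑ i, (p i) ^ 2 ≤ u) (hl : (100 : ℝ) * u * n ≤ (l : ℝ)) :
    (0.96 : ℝ) ≤
      (((Finset.powersetCard l (Finset.univ : Finset (Fin n))).filter
          (fun U => (l : ℝ) / (2 * n) ≤ ∑ i ∈ U, p i ∧
            ∑ i ∈ U, p i ≤ 3 * (l : ℝ) / (2 * n))).card : ℝ) /
        (Nat.choose n l : ℝ) := by
  have hn0 : (0 : ℝ) < n := by exact_mod_cast hn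
  have hl0 : (0 : ℝ) < l := by exact_mod_cast hl1
  set S : ℝ := ∑ i, (p i) ^ 2 with hS
  have hS0 : 0 ≤ S := Finset.sum_nonneg fun i _ => sq_nonneg _
  have hS1 : S ≤ 1 := by
    have : ∀ i ∈ Finset.univ, (p i) ^ 2 ≤ p i := by
      intro i _
      have hpi1 : p i ≤ 1 := by
        rw [← hp1]
        exact Finset.single_le_sum (fun j _ => hp0 j) (Finset.mem_univ i)
      nlinarith [hp0 i]
    calc S ≤ ∑ i, p i := Finset.sum_le_sum this
    _ = 1 := hp1
  have hSn : (1 : ℝ) ≤ n * S := by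
    have := sq_sum_le_card_mul_sum_sq (s := (Finset.univ : Finset (Fin n))) (f := p)
    rw [hp1] at this
    simpa [Finset.card_univ] using this
  have hSu : S ≤ u := hu
  have hl100 : (100 : ℝ) ≤ (l : ℝ) := by
    calc (100 : ℝ) = 100 * 1 := by ring
    _ ≤ 100 * (n * S) := by linarith
    _ ≤ 100 * (n * u) := by nlinarith
    _ = 100 * u * n := by ring
    _ ≤ l := hl
  have hl2 : 2 ≤ l := by exact_mod_cast le_trans (by norm_num : (2:ℝ) ≤ 100) hl100
  by_cases hcase : l = n
  · -- trivial case: the only subset is univ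
    subst hcase
    have hps : Finset.powersetCard l (Finset.univ : Finset (Fin l)) = {Finset.univ} := by
      have := Finset.powersetCard_self (Finset.univ : Finset (Fin l))
      rwa [Finset.card_univ, Fintype.card_fin] at this
    rw [hps, Nat.choose_self]
    have hmem : (l : ℝ) / (2 * l) ≤ ∑ i, p i ∧ ∑ i, p i ≤ 3 * (l : ℝ) / (2 * l) := by
      rw [hp1]
      constructor
      · rw [div_le_one (by positivity)]; linarith
      · rw [le_div_iff₀ (by positivity)]; linarith
    rw [Finset.filter_singleton, if_pos hmem]
    norm_num
  · -- main case : l < n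
    have hlt : l < n := lt_of_le_of_ne hln hcase
    have hn2 : 2 ≤ n := lt_of_le_of_lt hl1 hlt
    set P := Finset.powersetCard l (Finset.univ : Finset (Fin n)) with hP
    set N : ℝ := (Nat.choose n l : ℝ) with hN
    set a : ℝ := ((n - 1).choose (l - 1) : ℝ) with ha
    set b : ℝ := ((n - 2).choose (l - 2) : ℝ) with hb
    have hNpos : 0 < N := by rw [hN]; exact_mod_cast Nat.choose_pos hln
    have ha0 : 0 ≤ a := by positivity
    -- counting identities
    have hna : (n : ℝ) * a = l * N := by
      have h := Nat.add_one_mul_choose_eq (n - 1) (l - 1)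
      rw [(by omega : n - 1 + 1 = n), (by omega : l - 1 + 1 = l)] at h
      have hcast : ((n * (n - 1).choose (l - 1) : ℕ) : ℝ)
          = ((n.choose l * l : ℕ) : ℝ) := by exact_mod_cast h
      push_cast at hcast
      rw [ha, hN]
      linarith [hcast]
    have hnb : ((n : ℝ) - 1) * b = ((l : ℝ) - 1) * a := by
      have h := Nat.add_one_mul_choose_eq (n - 2) (l - 2)
      have hn1 : n - 2 + 1 = n - 1 := by omega
      have hl1' : l - 2 + 1 = l - 1 := by omega
      rw [hn1, hl1'] at h
      have hcast : (((n - 1) * (n - 2).choose (l - 2) : ℕ) : ℝ)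
          = (((n - 1).choose (l - 1) * (l - 1) : ℕ) : ℝ) := by exact_mod_cast h
      have e1 : ((n - 1 : ℕ) : ℝ) = (n : ℝ) - 1 := by
        rw [Nat.cast_sub (by omega : 1 ≤ n)]; norm_num
      have e2 : ((l - 1 : ℕ) : ℝ) = (l : ℝ) - 1 := by
        rw [Nat.cast_sub (by omega : 1 ≤ l)]; norm_num
      push_cast at hcast
      rw [e1, e2] at hcast
      rw [ha, hb]
      linarith [hcast]
    -- counts of subsets containing one resp. two given elements
    have hcount1 : ∀ i : Fin n, ((P.filter (fun U => i ∈ U)).card : ℝ) = a := by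
      intro i
      have := cmc_count_subsets (Finset.univ : Finset (Fin n)) {i} l
        (Finset.subset_univ _) (by simpa using hl1)
      rw [Finset.card_singleton, Finset.card_univ, Fintype.card_fin] at this
      have heq : P.filter (fun U => i ∈ U)
          = (Finset.powersetCard l (Finset.univ : Finset (Fin n))).filter (fun U => {i} ⊆ U) := by
        apply Finset.filter_congr
        intro U _
        simp [Finset.singleton_subset_iff]
      rw [heq, this, ha]
    have hcount2 : ∀ i j : Fin n, i ≠ j →
        ((P.filter (fun U => i ∈ U ∧ j ∈ U)).card : ℝ) = b := by
      intro i j hij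
      have hc2 : ({i, j} : Finset (Fin n)).card = 2 := by
        rw [Finset.card_insert_of_notMem (by simpa using hij), Finset.card_singleton]
      have := cmc_count_subsets (Finset.univ : Finset (Fin n)) {i, j} l
        (Finset.subset_univ _) (by rw [hc2]; exact hl2)
      rw [hc2, Finset.card_univ, Fintype.card_fin] at this
      have heq : P.filter (fun U => i ∈ U ∧ j ∈ U)
          = (Finset.powersetCard l (Finset.univ : Finset (Fin n))).filter
              (fun U => ({i, j} : Finset (Fin n)) ⊆ U) := by
        apply Finset.filter_congr
        intro U _
        simp [Finset.insert_subset_iff, Finset.singleton_subset_iff]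
      rw [heq, this, hb]
    -- first moment
    have hM1 : ∑ U ∈ P, ∑ i ∈ U, p i = a := by
      rw [cmc_swap_sum]
      calc ∑ i, ((P.filter (fun U => i ∈ U)).card : ℝ) * p i
          = ∑ i, a * p i := by
            refine Finset.sum_congr rfl fun i _ => ?_; rw [hcount1 i]
        _ = a * ∑ i, p i := by rw [Finset.mul_sum]
        _ = a := by rw [hp1, mul_one]
    -- second moment
    have hM2 : ∑ U ∈ P, (∑ i ∈ U, p i) ^ 2 = b + (a - b) * S := by
      rw [cmc_swap_sum2]
      have hterm : ∀ i j : Fin n,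
          ((P.filter (fun U => i ∈ U ∧ j ∈ U)).card : ℝ) * (p i * p j)
            = b * (p i * p j) + (if j = i then (a - b) * (p i * p j) else 0) := by
        intro i j
        by_cases hij : j = i
        · subst hij
          have hfe : P.filter (fun U => j ∈ U ∧ j ∈ U) = P.filter (fun U => j ∈ U) :=
            Finset.filter_congr (fun U _ => by simp)
          rw [if_pos rfl, hfe, hcount1 j]
          ring
        · rw [if_neg hij, hcount2 i j (fun h => hij h.symm)]
          ring
      calc ∑ i, ∑ j, ((P.filter (fun U => i ∈ U ∧ j ∈ U)).card : ℝ) * (p i * p j)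
          = ∑ i, ∑ j, (b * (p i * p j) + (if j = i then (a - b) * (p i * p j) else 0)) := by
            exact Finset.sum_congr rfl fun i _ => Finset.sum_congr rfl fun j _ => hterm i j
        _ = ∑ i, (b * (p i * ∑ j, p j) + (a - b) * (p i * p i)) := by
            refine Finset.sum_congr rfl fun i _ => ?_
            rw [Finset.sum_add_distrib, Finset.sum_ite_eq' Finset.univ i
              (fun j => (a - b) * (p i * p j)), if_pos (Finset.mem_univ i)]
            rw [← Finset.mul_sum, ← Finset.mul_sum]
        _ = b * ((∑ i, p i) * (∑ j, p j)) + (a - b) * ∑ i, p i * p i := by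
            rw [Finset.sum_add_distrib, ← Finset.mul_sum, ← Finset.mul_sum,
              ← Finset.sum_mul]
        _ = b + (a - b) * S := by
            rw [hp1, hS]
            simp [sq]
    -- variance bound
    set m : ℝ := (l : ℝ) / n with hm
    have hm0 : 0 < m := by positivity
    have hm1 : m ≤ 1 := by rw [hm, div_le_one hn0]; exact_mod_cast hln
    have haN : a = m * N := by
      rw [hm]; field_simp; linarith [hna]
    have hb0 : 0 ≤ b := by rw [hb]; positivity
    have hbma : b ≤ m * a := by
      have hn1 : (0:ℝ) < (n:ℝ) - 1 := by
        have : (2:ℝ) ≤ n := by exact_mod_cast hn2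
        linarith
      have hlnR : (l : ℝ) ≤ n := by exact_mod_cast hln
      have hba : b ≤ a := by
        have h1 : ((l:ℝ) - 1) * a ≤ ((n:ℝ) - 1) * a :=
          mul_le_mul_of_nonneg_right (by linarith) ha0
        have h2 : ((n:ℝ) - 1) * b ≤ ((n:ℝ) - 1) * a := by linarith [hnb]
        exact (mul_le_mul_iff_right₀ hn1).mp h2
      rw [hm, div_mul_eq_mul_div, le_div_iff₀ hn0]
      calc b * n = ((n:ℝ) - 1) * b + b := by ring
        _ = ((l:ℝ) - 1) * a + b := by rw [hnb]
        _ ≤ ((l:ℝ) - 1) * a + a := by linarith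
        _ = (l:ℝ) * a := by ring
    have hV : ∑ U ∈ P, ((∑ i ∈ U, p i) - m) ^ 2 ≤ N * m ^ 2 / 100 := by
      have hexp : ∑ U ∈ P, ((∑ i ∈ U, p i) - m) ^ 2
          = (∑ U ∈ P, (∑ i ∈ U, p i) ^ 2) - 2 * m * (∑ U ∈ P, ∑ i ∈ U, p i)
            + (P.card : ℝ) * m ^ 2 := by
        rw [Finset.sum_congr rfl (fun U _ => by ring :
          ∀ U ∈ P, ((∑ i ∈ U, p i) - m) ^ 2
            = (∑ i ∈ U, p i) ^ 2 - 2 * m * (∑ i ∈ U, p i) + m ^ 2)]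
        rw [Finset.sum_add_distrib, Finset.sum_sub_distrib, ← Finset.mul_sum,
          Finset.sum_const, nsmul_eq_mul]
      have hPcard : (P.card : ℝ) = N := by
        rw [hP, Finset.card_powersetCard, Finset.card_univ, Fintype.card_fin, hN]
      rw [hexp, hM1, hM2, hPcard]
      have huSm : S ≤ m / 100 := by
        rw [hm, div_div, le_div_iff₀ (by positivity : (0:ℝ) < (n:ℝ) * 100)]
        calc S * ((n:ℝ) * 100) = 100 * S * n := by ring
          _ ≤ 100 * u * n := by nlinarith
          _ ≤ l := hl
      -- V = b(1-S) + aS - 2ma + Nm² ≤ (ma)(1-S) + aS - 2ma + Nm² = mNS(1-m) ≤ mNS ≤ mN(m/100)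
      have step1 : b + (a - b) * S - 2 * m * a + N * m ^ 2
          ≤ m * a * (1 - S) + a * S - 2 * m * a + N * m ^ 2 := by nlinarith [hbma, hS1]
      have step2 : m * a * (1 - S) + a * S - 2 * m * a + N * m ^ 2 = m * N * S * (1 - m) := by
        rw [haN]; ring
      have step3 : m * N * S * (1 - m) ≤ m * N * S := by nlinarith [hm0, hNpos, hS0, hm1]
      have step4 : m * N * S ≤ N * m ^ 2 / 100 := by
        have := mul_le_mul_of_nonneg_left huSm (by positivity : (0:ℝ) ≤ m * N)
        calc m * N * S ≤ m * N * (m / 100) := this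
          _ = N * m ^ 2 / 100 := by ring
      linarith
    -- Chebyshev counting
    set E : Finset (Finset (Fin n)) := P.filter
      (fun U => (l : ℝ) / (2 * n) ≤ ∑ i ∈ U, p i ∧ ∑ i ∈ U, p i ≤ 3 * (l : ℝ) / (2 * n)) with hE
    set B : Finset (Finset (Fin n)) := P.filter
      (fun U => ¬((l : ℝ) / (2 * n) ≤ ∑ i ∈ U, p i ∧ ∑ i ∈ U, p i ≤ 3 * (l : ℝ) / (2 * n))) with hB
    have hhalf : (l : ℝ) / (2 * n) = m / 2 := by rw [hm]; ring
    have h3half : 3 * (l : ℝ) / (2 * n) = m + m / 2 := by rw [hm]; ring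
    have hBbound : ∀ U ∈ B, (m / 2) ^ 2 ≤ ((∑ i ∈ U, p i) - m) ^ 2 := by
      intro U hU
      rw [hB, Finset.mem_filter] at hU
      rw [hhalf, h3half, not_and_or, not_le, not_le] at hU
      rcases hU.2 with h | h
      · nlinarith [hm0]
      · nlinarith [hm0]
    have hBV : (B.card : ℝ) * (m / 2) ^ 2 ≤ N * m ^ 2 / 100 := by
      calc (B.card : ℝ) * (m / 2) ^ 2 = ∑ _U ∈ B, (m / 2) ^ 2 := by
            rw [Finset.sum_const, nsmul_eq_mul]
        _ ≤ ∑ U ∈ B, ((∑ i ∈ U, p i) - m) ^ 2 := Finset.sum_le_sum hBbound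
        _ ≤ ∑ U ∈ P, ((∑ i ∈ U, p i) - m) ^ 2 := by
            apply Finset.sum_le_sum_of_subset_of_nonneg (Finset.filter_subset _ _)
            intro U _ _; positivity
        _ ≤ N * m ^ 2 / 100 := hV
    have hBcard : (B.card : ℝ) ≤ N * 0.04 := by
      have hm2 : (0:ℝ) < (m / 2) ^ 2 := by positivity
      nlinarith [hBV, hm2]
    have hPcard : (P.card : ℝ) = N := by
      rw [hP, Finset.card_powersetCard, Finset.card_univ, Fintype.card_fin, hN]
    have hnat : E.card + B.card = P.card := by
      rw [hE, hB]; exact Finset.card_filter_add_card_filter_not _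
    have hsplit : (E.card : ℝ) + (B.card : ℝ) = N := by
      rw [← hPcard]; exact_mod_cast hnat
    rw [le_div_iff₀ hNpos]
    linarith [hsplit, hBcard]
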